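/- Addable and removable nodes are determined by the boundary flow. Let f be a flow on a valid ladder presentation P of length s (parameters n, ℓ, m), let 0 ≤ r ≤ s, and let T^{(r)} denote the standard n-multitableau produced by the filling map ι from the first r steps of f. Then for every ρ ∈ {1,…,m−1} and every component index t ∈ {1,…,n}: the t-th component of T^{(r)} has an addable node of residue ρ if and only if t ∈ S^{(r)}_ρ ∖ S^{(r)}_{ρ+1}, and it has a removable node of residue ρ if and only if t ∈ S^{(r)}_{ρ+1} ∖ S^{(r)}_ρ. -/

import Mathlib

open scoped Classical

namespace SlnWeb

noncomputable section

/-- `p r` is the length of the `r`-th row (0-indexed) of a Young diagram. -/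
def IsPartition (p : ℕ → ℕ) : Prop :=
  Antitone p ∧ ∃ N, p N = 0

/-- The 0-indexed cell `(r, c)` lies in the Young diagram of `p`. -/
def InDiag (p : ℕ → ℕ) (r c : ℕ) : Prop :=
  c < p r

/-- Residue (with shift `ℓ`) of the 0-indexed cell `(r, c)`; for the
corresponding 1-indexed cell `(r+1, c+1)` this is `(c+1) - (r+1) + ℓ`. -/
def resOf (ℓ : ℕ) (r c : ℕ) : ℤ :=
  (c : ℤ) - (r : ℤ) + (ℓ : ℤ)

/-- `(r, c)` (0-indexed) is an addable cell of `p`. -/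
def IsAddableCell (p : ℕ → ℕ) (r c : ℕ) : Prop :=
  c = p r ∧ (r = 0 ∨ p r < p (r - 1))

/-- `(r, c)` (0-indexed) is a removable cell of `p`. -/
def IsRemovableCell (p : ℕ → ℕ) (r c : ℕ) : Prop :=
  c + 1 = p r ∧ p (r + 1) < p r

/-- Add to `p` its (unique) addable cell of residue `k`, if there is one. -/
def addRes (ℓ : ℕ) (p : ℕ → ℕ) (k : ℤ) : ℕ → ℕ :=
  if h : ∃ r, (r = 0 ∨ p r < p (r - 1)) ∧ (p r : ℤ) - (r : ℤ) + (ℓ : ℤ) = k then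
    Function.update p h.choose (p h.choose + 1)
  else p

/-- A multitableau: `shape t r` is the length of the `r`-th row (0-indexed) of
the `t`-th component (components are indexed by `t ∈ {1,…,n}`), and
`entry t r c` is the entry of the 0-indexed cell `(r, c)` of the `t`-th
component; everything is normalised to `0` outside of the diagrams. -/
structure MultiTableau where
  shape : ℕ → ℕ → ℕ
  entry : ℕ → ℕ → ℕ → ℕ

/-- A standard `n`-multitableau with entries in `{1,…,s}` (residue shift `ℓ`):
each component is a partition, components are normalised to be empty outside
of `{1,…,n}`, entries lie in `{1,…,s}` and are normalised to `0` outside the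
diagram, entries strictly increase along rows and down columns, no entry is
repeated inside a single component, and all nodes carrying the same entry have
the same residue. -/
def IsStandard (n ℓ s : ℕ) (M : MultiTableau) : Prop :=
  (∀ t, IsPartition (M.shape t)) ∧
  (∀ t, (t = 0 ∨ n < t) → ∀ r, M.shape t r = 0) ∧
  (∀ t r c, InDiag (M.shape t) r c → 1 ≤ M.entry t r c ∧ M.entry t r c ≤ s) ∧
  (∀ t r c, ¬ InDiag (M.shape t) r c → M.entry t r c = 0) ∧
  (∀ t r c c', c < c' → InDiag (M.shape t) r c' → M.entry t r c < M.entry t r c') ∧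
  (∀ t r r' c, r < r' → InDiag (M.shape t) r' c → M.entry t r c < M.entry t r' c) ∧
  (∀ t r c r' c', InDiag (M.shape t) r c → InDiag (M.shape t) r' c' →
    M.entry t r c = M.entry t r' c' → r = r' ∧ c = c') ∧
  (∀ t r c t' r' c', InDiag (M.shape t) r c → InDiag (M.shape t') r' c' →
    M.entry t r c = M.entry t' r' c' → resOf ℓ r c = resOf ℓ r' c')

/-- A ladder presentation of length `s` for the parameters `n`, `ℓ`, `m`:
the `r`-th step is `F_{i_r}^{(j_r)}` with `i_r = res r ∈ {1,…,m-1}` and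
`j_r = mult r ∈ {1,…,n}`. -/
structure LadderPresentation (n ℓ m s : ℕ) where
  res : Fin s → ℕ
  mult : Fin s → ℕ
  res_pos : ∀ r, 1 ≤ res r
  res_lt : ∀ r, res r < m
  mult_pos : ∀ r, 1 ≤ mult r
  mult_le : ∀ r, mult r ≤ n

/-- The weight sequence `k⁽⁰⁾, k⁽¹⁾, …` of a ladder presentation; positions `p`
are 1-indexed, `k⁽⁰⁾ = (n^ℓ)` and `k⁽ʳ⁾ = k⁽ʳ⁻¹⁾ - j_r·e_{i_r} + j_r·e_{i_r+1}`. -/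
def wtSeq {n ℓ m s : ℕ} (P : LadderPresentation n ℓ m s) : ℕ → ℕ → ℤ
  | 0, p => if 1 ≤ p ∧ p ≤ ℓ then (n : ℤ) else 0
  | r + 1, p =>
    if h : r < s then
      wtSeq P r p - (if p = P.res ⟨r, h⟩ then (P.mult ⟨r, h⟩ : ℤ) else 0) +
        (if p = P.res ⟨r, h⟩ + 1 then (P.mult ⟨r, h⟩ : ℤ) else 0)
    else wtSeq P r p

/-- A ladder presentation is valid if every entry of every weight in its weight
sequence lies in `{0,…,n}`. -/
def IsValid {n ℓ m s : ℕ} (P : LadderPresentation n ℓ m s) : Prop :=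
  ∀ r, r ≤ s → ∀ p, 1 ≤ p → p ≤ m → 0 ≤ wtSeq P r p ∧ wtSeq P r p ≤ (n : ℤ)

/-- A flow on a (valid) ladder presentation `P`.  `S r p ⊆ {1,…,n}` is the flow
label of the `p`-th boundary point after `r` steps (normalised to `∅` outside
`p ∈ {1,…,m}`), and `T r` is the flow label of the rung of the `r`-th ladder. -/
structure LadderFlow {n ℓ m s : ℕ} (P : LadderPresentation n ℓ m s) where
  S : Fin (s + 1) → ℕ → Finset ℕ
  T : Fin s → Finset ℕ
  S_sub : ∀ r p, S r p ⊆ Finset.Icc 1 n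
  S_outside : ∀ r p, (p = 0 ∨ m < p) → S r p = ∅
  S_card : ∀ r p, 1 ≤ p → p ≤ m → ((S r p).card : ℤ) = wtSeq P r.val p
  S_init : ∀ p, 1 ≤ p → p ≤ m → S 0 p = if p ≤ ℓ then Finset.Icc 1 n else ∅
  T_sub : ∀ r : Fin s, T r ⊆ S r.castSucc (P.res r)
  T_card : ∀ r : Fin s, (T r).card = P.mult r
  T_disj : ∀ r : Fin s, Disjoint (T r) (S r.castSucc (P.res r + 1))
  S_step_res : ∀ r : Fin s, S r.succ (P.res r) = S r.castSucc (P.res r) \ T r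
  S_step_res1 : ∀ r : Fin s, S r.succ (P.res r + 1) = S r.castSucc (P.res r + 1) ∪ T r
  S_step_other : ∀ r : Fin s, ∀ p, p ≠ P.res r → p ≠ P.res r + 1 →
    S r.succ p = S r.castSucc p

/-- Add, for every component `t ∈ Tset`, the (unique) addable cell of residue
`k` of that component, giving each of the new cells the entry `e`. -/
def stepAdd (ℓ : ℕ) (k : ℤ) (e : ℕ) (Tset : Finset ℕ) (M : MultiTableau) :
    MultiTableau where
  shape := fun t => if t ∈ Tset then addRes ℓ (M.shape t) k else M.shape t
  entry := fun t r c =>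
    if t ∈ Tset ∧ M.shape t r ≤ c ∧ c < addRes ℓ (M.shape t) k r then e
    else M.entry t r c

/-- The sequence of intermediate multitableaux built by the filling map `ι`:
at step `r` (0-indexed), for each `t ∈ T r`, the unique addable node of residue
`i_r` is added to the `t`-th component, with entry `r + 1`. -/
def iotaAux {n ℓ m s : ℕ} (P : LadderPresentation n ℓ m s) (f : LadderFlow P) :
    ℕ → MultiTableau
  | 0 => ⟨fun _ _ => 0, fun _ _ _ => 0⟩
  | r + 1 =>
    if h : r < s then
      stepAdd ℓ (P.res ⟨r, h⟩ : ℤ) (r + 1) (f.T ⟨r, h⟩) (iotaAux P f r)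
    else iotaAux P f r

/-- The filling map `ι`. -/
def iotaMap {n ℓ m s : ℕ} (P : LadderPresentation n ℓ m s) (f : LadderFlow P) :
    MultiTableau :=
  iotaAux P f s

/-- Every entry of `{1,…,s}` occurs in `M`. -/
def AllEntriesOccur (s : ℕ) (M : MultiTableau) : Prop :=
  ∀ e, 1 ≤ e → e ≤ s → ∃ t r c, InDiag (M.shape t) r c ∧ M.entry t r c = e

/-- All nodes of `M` have residue in `{1,…,m-1}`. -/
def ResInRange (ℓ m : ℕ) (M : MultiTableau) : Prop :=
  ∀ t r c, InDiag (M.shape t) r c → 1 ≤ resOf ℓ r c ∧ resOf ℓ r c ≤ (m : ℤ) - 1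

/-- `(P, f)` is the image of the multitableau `M` under the growth map `g`:
`i_r` is the common residue of the nodes of `M` with entry `r`, and `T r` is
the set of components of `M` containing a node with entry `r` (the remaining
data of `f`, i.e. the tuples `S`, is forced by the flow conditions, and
`j_r = |T r|` is forced by the flow condition `T_card`). -/
def GrowthData {n ℓ m s : ℕ} (M : MultiTableau) (P : LadderPresentation n ℓ m s)
    (f : LadderFlow P) : Prop :=
  (∀ r : Fin s, ∀ t r' c, InDiag (M.shape t) r' c → M.entry t r' c = r.val + 1 →
    (P.res r : ℤ) = resOf ℓ r' c) ∧
  (∀ r : Fin s, ∀ t,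
    t ∈ f.T r ↔ ∃ r' c, InDiag (M.shape t) r' c ∧ M.entry t r' c = r.val + 1)

/-- `#{(a,b) ∈ A × B : a < b}`. -/
def inv2 (A B : Finset ℕ) : ℕ :=
  ((A ×ˢ B).filter fun ab => ab.1 < ab.2).card

/-- The weight of a flow:
`wt(f) = Σ_r ( inv(S⁽ʳ⁾_{i_r}, T_r) − inv(S⁽ʳ⁻¹⁾_{i_r+1}, T_r) )`. -/
def wtFlow {n ℓ m s : ℕ} (P : LadderPresentation n ℓ m s) (f : LadderFlow P) : ℤ :=
  ∑ r : Fin s,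
    ((inv2 (f.S r.succ (P.res r)) (f.T r) : ℤ) -
      (inv2 (f.S r.castSucc (P.res r + 1)) (f.T r) : ℤ))

/-- The components of `M` (among `{1,…,n}`) containing a node with entry `j`. -/
def compsWith (n : ℕ) (M : MultiTableau) (j : ℕ) : Finset ℕ :=
  (Finset.Icc 1 n).filter fun t => ∃ r c, InDiag (M.shape t) r c ∧ M.entry t r c = j

/-- The shape of `M` with all entries `> j` removed, where moreover in the
components outside `Keep` the nodes with entry `j` are removed as well. -/
def shapeTrunc (M : MultiTableau) (j : ℕ) (Keep : Finset ℕ) : ℕ → ℕ → ℕ :=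
  fun t r =>
    ((Finset.range (M.shape t r)).filter fun c =>
      M.entry t r c ≤ (if t ∈ Keep then j else j - 1)).card

/-- The row of the node with entry `j` in component `t` of `M`. -/
def nodeRow (M : MultiTableau) (j t : ℕ) : ℕ :=
  if h : ∃ r c, InDiag (M.shape t) r c ∧ M.entry t r c = j then h.choose else 0

/-- The column of the node with entry `j` in component `t` of `M`. -/
def nodeCol (M : MultiTableau) (j t : ℕ) : ℕ :=
  if h : ∃ r c, InDiag (M.shape t) r c ∧ M.entry t r c = j then
    h.choose_spec.choose
  else 0

/-- The number of addable nodes of `sh` of residue `ρ` lying strictly after the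
position `(t, r)` in the order `⪯` (at most one addable node of a given residue
per component). -/
def cntAddAfter (n ℓ : ℕ) (sh : ℕ → ℕ → ℕ) (ρ : ℤ) (t r : ℕ) : ℕ :=
  ((Finset.Icc 1 n).filter fun t' => ∃ r' c', IsAddableCell (sh t') r' c' ∧
    resOf ℓ r' c' = ρ ∧ (t' < t ∨ (t' = t ∧ r < r'))).card

/-- The number of removable nodes of `sh` of residue `ρ` lying strictly after
the position `(t, r)` in the order `⪯`. -/
def cntRemAfter (n ℓ : ℕ) (sh : ℕ → ℕ → ℕ) (ρ : ℤ) (t r : ℕ) : ℕ :=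
  ((Finset.Icc 1 n).filter fun t' => ∃ r' c', IsRemovableCell (sh t') r' c' ∧
    resOf ℓ r' c' = ρ ∧ (t' < t ∨ (t' = t ∧ r < r'))).card

/-- The contribution `deg(Tʲ)` of the entry `j` to the Brundan–Kleshchev–Wang
degree of the standard multitableau `M`: listing the nodes with entry `j` as
`N₁ ≺ ⋯ ≺ N_t` (i.e. by decreasing component index), it is
`Σ_p (A_p − R_p) − t(t−1)/2`, where `A_p` (resp. `R_p`) is the number of
addable (resp. removable) nodes of the residue of `N_p`, strictly after `N_p`,
of the multipartition underlying `Tʲ` with the nodes `N_{p+1},…,N_t` removed. -/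
def degStep (n ℓ : ℕ) (M : MultiTableau) (j : ℕ) : ℤ :=
  (∑ t ∈ compsWith n M j,
    ((cntAddAfter n ℓ (shapeTrunc M j ((compsWith n M j).filter fun t' => t ≤ t'))
        (resOf ℓ (nodeRow M j t) (nodeCol M j t)) t (nodeRow M j t) : ℤ) -
      (cntRemAfter n ℓ (shapeTrunc M j ((compsWith n M j).filter fun t' => t ≤ t'))
        (resOf ℓ (nodeRow M j t) (nodeCol M j t)) t (nodeRow M j t) : ℤ))) -
  (((compsWith n M j).card * ((compsWith n M j).card - 1) / 2 : ℕ) : ℤ)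

/-- The Brundan–Kleshchev–Wang degree of a standard multitableau with entries
in `{1,…,s}`. -/
def degBKW (n ℓ s : ℕ) (M : MultiTableau) : ℤ :=
  ∑ j ∈ Finset.Icc 1 s, degStep n ℓ M j

/-- `M` has the residue sequence `((i_1,j_1),…,(i_s,j_s))` recorded by `P`:
for each `r`, exactly `j_r` nodes of `M` carry the entry `r` (equivalently,
under standardness, `j_r` components contain the entry `r`) and they all have
residue `i_r`. -/
def HasResSeq {n ℓ m s : ℕ} (P : LadderPresentation n ℓ m s) (M : MultiTableau) :
    Prop :=
  ∀ r : Fin s,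
    (compsWith n M (r.val + 1)).card = P.mult r ∧
    ∀ t r' c, InDiag (M.shape t) r' c → M.entry t r' c = r.val + 1 →
      resOf ℓ r' c = (P.res r : ℤ)

/-- The multipartition `λ(S)` determined by a boundary tuple `S`: writing
`p_1 < ⋯ < p_ℓ` for the elements of `{ p ∈ {1,…,m} : t ∈ S p }`, the `r`-th
part (1-indexed) of its `t`-th component is `p_{ℓ+1−r} − (ℓ+1−r)`. -/
def shapeOfTuple (ℓ m : ℕ) (Sb : ℕ → Finset ℕ) : ℕ → ℕ → ℕ :=
  fun t r =>
    if r < ℓ then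
      (((Finset.Icc 1 m).filter fun p => t ∈ Sb p).sort (· ≤ ·)).getD (ℓ - 1 - r) 0 -
        (ℓ - r)
    else 0

/-- Auxiliary: `p` is a "beta value" of the component shape `sh`:
there is a row `q < ℓ` with `sh q + (ℓ - q) = p`. -/
def BM (ℓ : ℕ) (sh : ℕ → ℕ) (p : ℕ) : Prop :=
  ∃ q, q < ℓ ∧ sh q + ℓ = p + q

lemma beta_inj {ℓ : ℕ} {sh : ℕ → ℕ} (hA : Antitone sh) {q q' p : ℕ}
    (h1 : sh q + ℓ = p + q) (h2 : sh q' + ℓ = p + q') : q = q' := by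
  rcases lt_trichotomy q q' with h | h | h
  · have := hA h.le; omega
  · exact h
  · have := hA h.le; omega

lemma addable_iff_BM {ℓ : ℕ} {sh : ℕ → ℕ} (hA : Antitone sh)
    (h0 : ∀ q, ℓ ≤ q → sh q = 0) {ρ : ℕ} (hρ1 : 1 ≤ ρ) :
    (∃ r' c, IsAddableCell sh r' c ∧ resOf ℓ r' c = (ρ : ℤ)) ↔
      (BM ℓ sh ρ ∧ ¬ BM ℓ sh (ρ + 1)) := by
  constructor
  · rintro ⟨r', c, ⟨hc, hadd⟩, hres⟩
    subst hc
    simp only [resOf] at hres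
    have hβ : sh r' + ℓ = ρ + r' := by omega
    have hrℓ : r' < ℓ := by
      by_contra hcon
      have := h0 r' (not_lt.mp hcon)
      omega
    refine ⟨⟨r', hrℓ, hβ⟩, ?_⟩
    rintro ⟨q, hq, he⟩
    rcases lt_trichotomy q r' with h | h | h
    · rcases hadd with h' | hlt
      · omega
      · have h1 : sh (r' - 1) ≤ sh q := hA (by omega)
        omega
    · rw [h] at he
      omega
    · have := hA h.le
      omega
  · rintro ⟨⟨q, hq, he⟩, hnot⟩
    refine ⟨q, sh q, ⟨rfl, ?_⟩, by simp only [resOf]; omega⟩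
    by_cases hq0 : q = 0
    · exact Or.inl hq0
    · right
      have h1 : sh q ≤ sh (q - 1) := hA (by omega)
      rcases eq_or_lt_of_le h1 with heq | hlt
      · exact absurd ⟨q - 1, by omega, by omega⟩ hnot
      · exact hlt

lemma removable_iff_BM {ℓ : ℕ} {sh : ℕ → ℕ} (hA : Antitone sh)
    (h0 : ∀ q, ℓ ≤ q → sh q = 0) {ρ : ℕ} (hρ1 : 1 ≤ ρ) :
    (∃ r' c, IsRemovableCell sh r' c ∧ resOf ℓ r' c = (ρ : ℤ)) ↔
      (BM ℓ sh (ρ + 1) ∧ ¬ BM ℓ sh ρ) := by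
  constructor
  · rintro ⟨r', c, ⟨hc, hlt⟩, hres⟩
    simp only [resOf] at hres
    have hβ : sh r' + ℓ = ρ + 1 + r' := by omega
    have hrℓ : r' < ℓ := by
      by_contra hcon
      have := h0 r' (not_lt.mp hcon)
      omega
    refine ⟨⟨r', hrℓ, hβ⟩, ?_⟩
    rintro ⟨q, hq, he⟩
    rcases le_or_gt q r' with h | h
    · have := hA h
      omega
    · have := hA (show r' + 1 ≤ q by omega)
      omega
  · rintro ⟨⟨q, hq, he⟩, hnot⟩
    have hpos : 1 ≤ sh q := by
      by_contra hcon
      have h00 : sh q = 0 := by omega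
      have hql : q + 1 < ℓ := by omega
      refine hnot ⟨q + 1, hql, ?_⟩
      have h1 : sh (q + 1) ≤ sh q := hA (by omega)
      omega
    refine ⟨q, sh q - 1, ⟨by omega, ?_⟩, by simp only [resOf]; omega⟩
    have h1 : sh (q + 1) ≤ sh q := hA (by omega)
    rcases eq_or_lt_of_le h1 with heq | hlt'
    · by_cases hql : q + 1 < ℓ
      · exact absurd ⟨q + 1, hql, by omega⟩ hnot
      · have := h0 (q + 1) (by omega)
        omega
    · exact hlt'

lemma addRes_spec {ℓ m : ℕ} {sh : ℕ → ℕ} (hA : Antitone sh)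
    (h0 : ∀ q, ℓ ≤ q → sh q = 0) (hm : ∀ q, q < ℓ → sh q + ℓ ≤ m + q)
    {i : ℕ} (hi1 : 1 ≤ i) (him : i < m)
    (hBi : BM ℓ sh i) (hBi1 : ¬ BM ℓ sh (i + 1)) :
    Antitone (addRes ℓ sh (i : ℤ)) ∧
    (∀ q, ℓ ≤ q → addRes ℓ sh (i : ℤ) q = 0) ∧
    (∀ q, q < ℓ → addRes ℓ sh (i : ℤ) q + ℓ ≤ m + q) ∧
    (¬ BM ℓ (addRes ℓ sh (i : ℤ)) i) ∧
    BM ℓ (addRes ℓ sh (i : ℤ)) (i + 1) ∧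
    (∀ p, p ≠ i → p ≠ i + 1 →
      (BM ℓ (addRes ℓ sh (i : ℤ)) p ↔ BM ℓ sh p)) := by
  have key : ∃ q1, q1 < ℓ ∧ sh q1 + ℓ = i + q1 ∧ (q1 = 0 ∨ sh q1 < sh (q1 - 1)) ∧
      ∀ q, addRes ℓ sh (i : ℤ) q = if q = q1 then sh q1 + 1 else sh q := by
    obtain ⟨r', c, ⟨hc, hadd⟩, hres⟩ := (addable_iff_BM hA h0 hi1).mpr ⟨hBi, hBi1⟩
    subst hc
    simp only [resOf] at hres
    have hEx : ∃ q, (q = 0 ∨ sh q < sh (q - 1)) ∧ (sh q : ℤ) - q + ℓ = (i : ℤ) :=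
      ⟨r', hadd, by omega⟩
    refine ⟨hEx.choose, ?_, ?_, hEx.choose_spec.1, ?_⟩
    · have h1 := hEx.choose_spec.2
      by_contra hcon
      have := h0 hEx.choose (not_lt.mp hcon)
      omega
    · have h1 := hEx.choose_spec.2
      omega
    · intro q
      rw [addRes, dif_pos hEx, Function.update_apply]
  obtain ⟨q1, hq1ℓ, hβ1, hadd1, happ⟩ := key
  refine ⟨?_, ?_, ?_, ?_, ?_, ?_⟩
  · intro a b hab
    rw [happ a, happ b]
    by_cases hb : b = q1
    · rw [if_pos hb]
      by_cases ha : a = q1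
      · rw [if_pos ha]
      · rw [if_neg ha]
        rcases hadd1 with h' | h'
        · omega
        · have h2 : sh (q1 - 1) ≤ sh a := hA (by omega)
          omega
    · rw [if_neg hb]
      by_cases ha : a = q1
      · rw [if_pos ha]
        have h2 : sh b ≤ sh q1 := hA (by omega)
        omega
      · rw [if_neg ha]
        exact hA hab
  · intro q hq
    rw [happ q, if_neg (by omega)]
    exact h0 q hq
  · intro q hq
    rw [happ q]
    by_cases hq' : q = q1
    · rw [if_pos hq']
      omega
    · rw [if_neg hq']
      exact hm q hq
  · rintro ⟨q, hq, he⟩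
    rw [happ q] at he
    by_cases hq' : q = q1
    · rw [if_pos hq'] at he
      omega
    · rw [if_neg hq'] at he
      exact hq' (beta_inj hA he hβ1)
  · exact ⟨q1, hq1ℓ, by rw [happ q1, if_pos rfl]; omega⟩
  · intro p hpi hpi1
    constructor
    · rintro ⟨q, hq, he⟩
      rw [happ q] at he
      by_cases hq' : q = q1
      · rw [if_pos hq'] at he
        omega
      · rw [if_neg hq'] at he
        exact ⟨q, hq, he⟩
    · rintro ⟨q, hq, he⟩
      have hq' : q ≠ q1 := by
        intro h'
        rw [h'] at he
        omega
      exact ⟨q, hq, by rw [happ q, if_neg hq']; exact he⟩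

lemma inv_main {n ℓ m s : ℕ} (P : LadderPresentation n ℓ m s) (f : LadderFlow P)
    (hmℓ : ℓ ≤ m) :
    ∀ r (hr : r ≤ s) t, 1 ≤ t → t ≤ n →
      Antitone ((iotaAux P f r).shape t) ∧
      (∀ q, ℓ ≤ q → (iotaAux P f r).shape t q = 0) ∧
      (∀ q, q < ℓ → (iotaAux P f r).shape t q + ℓ ≤ m + q) ∧
      (∀ p, 1 ≤ p → p ≤ m →
        (t ∈ f.S ⟨r, Nat.lt_succ_of_le hr⟩ p ↔
          BM ℓ ((iotaAux P f r).shape t) p)) := by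
  intro r
  induction r with
  | zero =>
    intro hr t ht1 ht2
    have hsh : (iotaAux P f 0).shape t = fun _ => 0 := rfl
    refine ⟨?_, ?_, ?_, ?_⟩
    · intro a b _
      rw [hsh]
    · intro q _
      rw [hsh]
    · intro q hq
      have hz : (iotaAux P f 0).shape t q = 0 := rfl
      omega
    · intro p hp1 hp2
      have h00 : (⟨0, Nat.lt_succ_of_le hr⟩ : Fin (s + 1)) = 0 := by
        ext; simp
      rw [h00, f.S_init p hp1 hp2, hsh]
      by_cases hpℓ : p ≤ ℓ
      · rw [if_pos hpℓ]
        simp only [Finset.mem_Icc]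
        constructor
        · intro _
          exact ⟨ℓ - p, by omega, by show (0 : ℕ) + ℓ = p + (ℓ - p); omega⟩
        · intro _
          exact ⟨ht1, ht2⟩
      · rw [if_neg hpℓ]
        simp only [Finset.notMem_empty, false_iff]
        rintro ⟨q, hq, he⟩
        simp only at he
        omega
  | succ r ih =>
    intro hr t ht1 ht2
    have hrs : r < s := hr
    obtain ⟨ihA, ih0, ihm, ihS⟩ := ih (le_of_lt hrs) t ht1 ht2
    set rr : Fin s := ⟨r, hrs⟩ with hrr
    set i : ℕ := P.res rr with hidef
    have hi1 : 1 ≤ i := P.res_pos rr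
    have him : i < m := P.res_lt rr
    have hiota : iotaAux P f (r + 1) =
        stepAdd ℓ (i : ℤ) (r + 1) (f.T rr) (iotaAux P f r) := by
      simp only [iotaAux, dif_pos hrs]
      rfl
    have hsucc : (⟨r + 1, Nat.lt_succ_of_le hr⟩ : Fin (s + 1)) = rr.succ := rfl
    have hcast : (⟨r, Nat.lt_succ_of_le (le_of_lt hrs)⟩ : Fin (s + 1)) =
        rr.castSucc := rfl
    by_cases htm : t ∈ f.T rr
    · have hsh' : (iotaAux P f (r + 1)).shape t =
          addRes ℓ ((iotaAux P f r).shape t) (i : ℤ) := by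
        rw [hiota]
        simp only [stepAdd, if_pos htm]
      have hBi : BM ℓ ((iotaAux P f r).shape t) i :=
        (ihS i hi1 (le_of_lt him)).mp (f.T_sub rr htm)
      have hBi1 : ¬ BM ℓ ((iotaAux P f r).shape t) (i + 1) := by
        intro hb
        have hS1 : t ∈ f.S rr.castSucc (i + 1) :=
          (ihS (i + 1) (by omega) (by omega)).mpr hb
        exact (Finset.disjoint_left.mp (f.T_disj rr)) htm hS1
      obtain ⟨cA, c0, cm, cBi, cBi1, cBoth⟩ :=
        addRes_spec ihA ih0 ihm hi1 him hBi hBi1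
      rw [hsh']
      refine ⟨cA, c0, cm, ?_⟩
      intro p hp1 hp2
      rw [hsucc]
      by_cases hpi : p = i
      · subst hpi
        rw [f.S_step_res rr]
        simp only [Finset.mem_sdiff]
        constructor
        · rintro ⟨-, hnt⟩
          exact absurd htm hnt
        · intro hb
          exact absurd hb cBi
      · by_cases hpi1 : p = i + 1
        · subst hpi1
          rw [f.S_step_res1 rr]
          simp only [Finset.mem_union]
          exact iff_of_true (Or.inr htm) cBi1
        · rw [f.S_step_other rr p hpi hpi1, cBoth p hpi hpi1]
          exact ihS p hp1 hp2
    · have hsh' : (iotaAux P f (r + 1)).shape t = (iotaAux P f r).shape t := by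
        rw [hiota]
        simp only [stepAdd, if_neg htm]
      rw [hsh']
      refine ⟨ihA, ih0, ihm, ?_⟩
      intro p hp1 hp2
      rw [hsucc]
      by_cases hpi : p = i
      · subst hpi
        rw [f.S_step_res rr]
        simp only [Finset.mem_sdiff]
        rw [← ihS i hp1 hp2]
        exact ⟨fun h => h.1, fun h => ⟨h, htm⟩⟩
      · by_cases hpi1 : p = i + 1
        · subst hpi1
          rw [f.S_step_res1 rr]
          simp only [Finset.mem_union]
          rw [← ihS (i + 1) hp1 hp2]
          constructor
          · rintro (h | h)
            · exact h
            · exact absurd h htm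
          · exact Or.inl
        · rw [f.S_step_other rr p hpi hpi1]
          exact ihS p hp1 hp2

/-!
STATEMENT 4: Addable and removable nodes are determined by the boundary flow.
For a flow `f` on a valid ladder presentation `P`, `0 ≤ r ≤ s`, every residue
`ρ ∈ {1,…,m−1}` and every component index `t ∈ {1,…,n}`: the `t`-th component
of the multitableau produced by `ι` from the first `r` steps has an addable
node of residue `ρ` iff `t ∈ S⁽ʳ⁾_ρ ∖ S⁽ʳ⁾_{ρ+1}`, and a removable node of
residue `ρ` iff `t ∈ S⁽ʳ⁾_{ρ+1} ∖ S⁽ʳ⁾_ρ`.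
-/
theorem addable_removable_from_boundary (n ℓ m : ℕ) (hn : 2 ≤ n) (hℓ : 1 ≤ ℓ)
    (hm : ℓ + 1 ≤ m) (s : ℕ) (P : LadderPresentation n ℓ m s) (hP : IsValid P)
    (f : LadderFlow P) (r : ℕ) (hr : r ≤ s) (ρ : ℕ) (hρ₁ : 1 ≤ ρ) (hρ₂ : ρ < m)
    (t : ℕ) (ht₁ : 1 ≤ t) (ht₂ : t ≤ n) :
    ((∃ r' c, IsAddableCell ((iotaAux P f r).shape t) r' c ∧
        resOf ℓ r' c = (ρ : ℤ)) ↔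
      (t ∈ f.S ⟨r, Nat.lt_succ_of_le hr⟩ ρ ∧
        t ∉ f.S ⟨r, Nat.lt_succ_of_le hr⟩ (ρ + 1))) ∧
    ((∃ r' c, IsRemovableCell ((iotaAux P f r).shape t) r' c ∧
        resOf ℓ r' c = (ρ : ℤ)) ↔
      (t ∈ f.S ⟨r, Nat.lt_succ_of_le hr⟩ (ρ + 1) ∧
        t ∉ f.S ⟨r, Nat.lt_succ_of_le hr⟩ ρ)) := by
  obtain ⟨hA, h0, hm', hS⟩ := inv_main P f (by omega) r hr t ht₁ ht₂
  constructor
  · rw [addable_iff_BM hA h0 hρ₁, hS ρ hρ₁ (le_of_lt hρ₂),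
      hS (ρ + 1) (by omega) (by omega)]
  · rw [removable_iff_BM hA h0 hρ₁, hS ρ hρ₁ (le_of_lt hρ₂),
      hS (ρ + 1) (by omega) (by omega)]

end

end SlnWeb
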